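/- Let f ∈ H² with f(0) ≠ 0. Then for every n, the n-th optimal polynomial approximant q_n of 1/f has no zeros in the closed unit disk. -/

import Mathlib

open scoped BigOperators
open Polynomial Filter

noncomputable section

/-- Coefficient sequence of the product p·f, where f is an analytic function on the disk
given by its Taylor coefficient sequence. -/
def polyMulSeq (p : Polynomial ℂ) (f : ℕ → ℂ) : ℕ → ℂ :=
  fun n => ∑ j ∈ Finset.range (n + 1), p.coeff j * f (n - j)

/-- The constant function 1 as a Taylor coefficient sequence. -/
def oneSeq : ℕ → ℂ := fun n => if n = 0 then 1 else 0

/-- Membership in the weighted Hardy space H²_ω. -/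
def MemHw (ω : ℕ → ℝ) (f : ℕ → ℂ) : Prop :=
  Summable (fun k => ‖f k‖ ^ 2 * ω k)

/-- Squared weighted norm ‖f‖²_ω. -/
def wNormSq (ω : ℕ → ℝ) (f : ℕ → ℂ) : ℝ := ∑' k, ‖f k‖ ^ 2 * ω k

/-- Weighted inner product ⟨f,g⟩_ω. -/
def wInner (ω : ℕ → ℝ) (f g : ℕ → ℂ) : ℂ :=
  ∑' k, f k * (starRingEnd ℂ) (g k) * (ω k : ℂ)

/-- `q` is the n-th optimal polynomial approximant of 1/f in H²_ω. -/
def IsOPA (ω : ℕ → ℝ) (f : ℕ → ℂ) (n : ℕ) (q : Polynomial ℂ) : Prop :=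
  q.natDegree ≤ n ∧
  ∀ p : Polynomial ℂ, p.natDegree ≤ n →
    wNormSq ω (polyMulSeq q f - oneSeq) ≤ wNormSq ω (polyMulSeq p f - oneSeq)

namespace OPAProof

open ComplexConjugate

abbrev Hsp := lp (fun _ : ℕ => ℂ) 2

local notation "⟪" x ", " y "⟫" => @inner ℂ _ _ x y

lemma memHw_iff {g : ℕ → ℂ} : MemHw (fun _ => 1) g ↔ Memℓp g 2 := by
  rw [MemHw, memℓp_gen_iff (p := 2) (by norm_num)]
  simp [Real.rpow_two]

lemma norm_sq_eq (g : Hsp) : ‖g‖ ^ 2 = ∑' k, ‖g k‖ ^ 2 := by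
  have h := lp.norm_rpow_eq_tsum (p := 2) (by norm_num) g
  simpa [Real.rpow_two] using h

lemma summable_sq (g : Hsp) : Summable fun k => ‖g k‖ ^ 2 := by
  have := (memℓp_gen_iff (p := 2) (by norm_num)).1 (lp.memℓp g)
  simpa [Real.rpow_two] using this

lemma wNormSq_eq (g : Hsp) : wNormSq (fun _ => 1) (⇑g) = ‖g‖ ^ 2 := by
  rw [wNormSq, norm_sq_eq]; simp

/-- shift by j -/
def shiftSeq (j : ℕ) (g : ℕ → ℂ) : ℕ → ℂ := fun n => if j ≤ n then g (n - j) else 0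

lemma memℓp_shift (j : ℕ) {g : ℕ → ℂ} (hg : Memℓp g 2) : Memℓp (shiftSeq j g) 2 := by
  rw [memℓp_gen_iff (p := 2) (by norm_num)] at hg ⊢
  rw [← summable_nat_add_iff j]
  simpa [shiftSeq] using hg

lemma polyMulSeq_add (p q : ℂ[X]) (f : ℕ → ℂ) :
    polyMulSeq (p + q) f = polyMulSeq p f + polyMulSeq q f := by
  funext n
  simp [polyMulSeq, add_mul, Finset.sum_add_distrib]

lemma polyMulSeq_monomial (j : ℕ) (a : ℂ) (f : ℕ → ℂ) :
    polyMulSeq (monomial j a) f = a • shiftSeq j f := by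
  funext n
  simp only [polyMulSeq, coeff_monomial, Pi.smul_apply, shiftSeq, smul_eq_mul]
  simp only [ite_mul, zero_mul]
  rw [Finset.sum_ite_eq (Finset.range (n+1)) j (fun i => a * f (n - i))]
  simp [Nat.lt_succ_iff, mul_ite]

lemma polyMulSeq_C_mul (c : ℂ) (p : ℂ[X]) (f : ℕ → ℂ) :
    polyMulSeq (C c * p) f = c • polyMulSeq p f := by
  funext n
  simp [polyMulSeq, coeff_C_mul, Finset.mul_sum, mul_assoc]

lemma polyMulSeq_one (f : ℕ → ℂ) : polyMulSeq 1 f = f := by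
  funext n
  rw [polyMulSeq]
  rw [Finset.sum_eq_single 0]
  · simp
  · intro b _ hb; simp [coeff_one, hb]
  · simp

lemma polyMulSeq_X_mul (p : ℂ[X]) (f : ℕ → ℂ) :
    polyMulSeq (X * p) f = shiftSeq 1 (polyMulSeq p f) := by
  funext n
  cases n with
  | zero => simp [polyMulSeq, shiftSeq, mul_coeff_zero]
  | succ m =>
    rw [polyMulSeq]
    rw [Finset.sum_range_succ']
    simp only [coeff_X_mul, mul_coeff_zero, coeff_X_zero, zero_mul, mul_zero, add_zero]
    simp [shiftSeq, polyMulSeq]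

lemma memℓp_polyMulSeq (p : ℂ[X]) {f : ℕ → ℂ} (hf : Memℓp f 2) :
    Memℓp (polyMulSeq p f) 2 := by
  induction p using Polynomial.induction_on' with
  | add p q hp hq => rw [polyMulSeq_add]; exact hp.add hq
  | monomial j a =>
    rw [polyMulSeq_monomial]
    exact (memℓp_shift j hf).const_smul a

lemma memℓp_oneSeq : Memℓp oneSeq 2 := by
  rw [memℓp_gen_iff (p := 2) (by norm_num)]
  apply summable_of_ne_finset_zero (s := {0})
  intro b hb
  simp only [Finset.mem_singleton] at hb
  simp [oneSeq, hb]

/-- variational orthogonality -/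
lemma orth_of_min {E : Type*} [NormedAddCommGroup E] [InnerProductSpace ℂ E] (e v : E)
    (h : ∀ c : ℂ, ‖e‖ ^ 2 ≤ ‖e + c • v‖ ^ 2) : ⟪v, e⟫ = 0 := by
  by_contra hw
  set w : ℂ := ⟪v, e⟫ with hwdef
  set t : ℝ := 1 / (‖v‖ ^ 2 + 1) with ht
  have ht0 : 0 < t := by positivity
  have h1 := h (-(t : ℂ) * w)
  rw [norm_add_sq (𝕜 := ℂ)] at h1
  have hie : ⟪e, (-(t:ℂ) * w) • v⟫ = -(t:ℂ) * w * conj w := by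
    rw [inner_smul_right]
    rw [← inner_conj_symm e v]
  rw [hie] at h1
  simp only [RCLike.re_to_complex] at h1
  have hre : (-(t:ℂ) * w * conj w).re = -t * Complex.normSq w := by
    have hz : (-(t:ℂ) * w * conj w) = ((-t * Complex.normSq w : ℝ) : ℂ) := by
      push_cast
      rw [← Complex.mul_conj]
      ring
    rw [hz, Complex.ofReal_re]
  rw [hre] at h1
  have hnv : ‖(-(t:ℂ) * w) • v‖ ^ 2 = t ^ 2 * Complex.normSq w * ‖v‖ ^ 2 := by
    rw [norm_smul, mul_pow, Complex.sq_norm, Complex.normSq_mul,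
      Complex.normSq_neg, Complex.normSq_ofReal]
    ring
  rw [hnv] at h1
  have hw2 : 0 < Complex.normSq w := by
    simpa [Complex.normSq_pos] using hw
  have h2 : 2 * t * Complex.normSq w ≤ t ^ 2 * Complex.normSq w * ‖v‖ ^ 2 := by nlinarith
  have h3 : t * ‖v‖ ^ 2 < 2 := by
    rw [ht]
    rw [div_mul_eq_mul_div, one_mul, div_lt_iff₀ (by positivity)]
    nlinarith [norm_nonneg v]
  nlinarith [mul_pos ht0 hw2, mul_lt_mul_of_pos_left h3 (mul_pos ht0 hw2)]

lemma inner_hsp (x y : Hsp) : ⟪x, y⟫ = ∑' k, conj (x k) * y k := by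
  rw [lp.inner_eq_tsum]
  exact tsum_congr fun k => RCLike.inner_apply' _ _

def oneH : Hsp := ⟨oneSeq, memℓp_oneSeq⟩

lemma oneH_apply (k : ℕ) : (oneH : ℕ → ℂ) k = if k = 0 then 1 else 0 := rfl

lemma inner_oneH (x : Hsp) : ⟪x, oneH⟫ = conj (x 0) := by
  rw [inner_hsp]
  rw [tsum_eq_single 0]
  · simp [oneH_apply]
  · intro b hb; simp [oneH_apply, hb]

lemma norm_oneH_sq : ‖oneH‖ ^ 2 = 1 := by
  rw [norm_sq_eq]
  rw [tsum_eq_single 0]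
  · simp [oneH_apply]
  · intro b hb; simp [oneH_apply, hb]

end OPAProof

open OPAProof ComplexConjugate

local notation "⟪" x ", " y "⟫" => @inner ℂ _ _ x y

set_option maxHeartbeats 1000000 in
/-- In H², if f(0) ≠ 0 then every opa of 1/f has no zeros in the closed unit disk. -/
theorem stmt_9 (f : ℕ → ℂ) (hf : MemHw (fun _ => 1) f) (hf0 : f 0 ≠ 0)
    (n : ℕ) (q : Polynomial ℂ) (hq : IsOPA (fun _ => 1) f n q) :
    ∀ z : ℂ, ‖z‖ ≤ 1 → q.eval z ≠ 0 := by
  intro α hα hroot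
  have hf2 : Memℓp f 2 := memHw_iff.1 hf
  have toHmem : ∀ p : ℂ[X], Memℓp (polyMulSeq p f) 2 := fun p => memℓp_polyMulSeq p hf2
  set toH : ℂ[X] → Hsp := fun p => (⟨polyMulSeq p f, toHmem p⟩ : Hsp) with htoH
  have toH_coe : ∀ p : ℂ[X], (toH p : ℕ → ℂ) = polyMulSeq p f := fun _ => rfl
  -- optimality in Hilbert form
  have hglue : ∀ p : ℂ[X],
      wNormSq (fun _ => 1) (polyMulSeq p f - oneSeq) = ‖toH p - oneH‖ ^ 2 := by
    intro p
    have hcoe : (⇑(toH p - oneH) : ℕ → ℂ) = polyMulSeq p f - oneSeq := rfl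
    rw [← hcoe]
    exact wNormSq_eq (toH p - oneH)
  have hopt : ∀ p : ℂ[X], p.natDegree ≤ n →
      ‖toH q - oneH‖ ^ 2 ≤ ‖toH p - oneH‖ ^ 2 := by
    intro p hp
    have := hq.2 p hp
    rwa [hglue, hglue] at this
  -- orthogonality
  have horth : ∀ p : ℂ[X], p.natDegree ≤ n → ⟪toH p, toH q - oneH⟫ = 0 := by
    intro p hp
    apply orth_of_min
    intro c
    have hdeg : (q + C c * p).natDegree ≤ n :=
      le_trans (natDegree_add_le _ _)
        (max_le hq.1 (le_trans (natDegree_C_mul_le c p) hp))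
    have hcomp : toH (q + C c * p) - oneH = (toH q - oneH) + c • toH p := by
      apply Subtype.ext
      show polyMulSeq (q + C c * p) f - oneSeq
          = (polyMulSeq q f - oneSeq) + c • polyMulSeq p f
      rw [polyMulSeq_add, polyMulSeq_C_mul]
      funext m
      simp only [Pi.add_apply, Pi.sub_apply, Pi.smul_apply, smul_eq_mul]
      ring
    have := hopt _ hdeg
    rwa [hcomp] at this
  -- strict bound : the optimal error is < 1
  have hlt : ‖toH q - oneH‖ ^ 2 < 1 := by
    set F : Hsp := toH 1 with hF
    have hFcoe : (F : ℕ → ℂ) = f := by rw [hF, toH_coe, polyMulSeq_one]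
    have hFpos : 0 < ‖F‖ := by
      rw [norm_pos_iff]
      intro h0
      apply hf0
      have : (F : ℕ → ℂ) 0 = 0 := by rw [h0]; rfl
      rwa [hFcoe] at this
    set c : ℂ := conj (f 0) / ((‖F‖ ^ 2 : ℝ) : ℂ) with hc
    have hCc : toH (C c) = c • F := by
      apply Subtype.ext
      show polyMulSeq (C c) f = c • (F : ℕ → ℂ)
      rw [hFcoe, ← mul_one (C c), polyMulSeq_C_mul, polyMulSeq_one]
    have key : ‖c • F - oneH‖ ^ 2 = 1 - Complex.normSq (f 0) / ‖F‖ ^ 2 := by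
      rw [norm_sub_sq (𝕜 := ℂ)]
      rw [inner_oneH, norm_oneH_sq]
      have h0 : ((c • F : Hsp) : ℕ → ℂ) 0 = c * f 0 := by
        rw [lp.coeFn_smul, Pi.smul_apply, hFcoe, smul_eq_mul]
      rw [h0]
      have hcc : conj (c * f 0) = ((Complex.normSq (f 0) / ‖F‖ ^ 2 : ℝ) : ℂ) := by
        rw [hc]
        rw [map_mul, map_div₀, Complex.conj_conj, Complex.conj_ofReal,
          div_mul_eq_mul_div, Complex.mul_conj]
        push_cast
        ring
      rw [hcc]
      have hnc : ‖c • F‖ ^ 2 = Complex.normSq (f 0) / ‖F‖ ^ 2 := by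
        rw [norm_smul, mul_pow, Complex.sq_norm, hc]
        rw [Complex.normSq_div, Complex.normSq_conj, Complex.normSq_ofReal]
        have : ‖F‖ ^ 2 ≠ 0 := by positivity
        field_simp
      rw [hnc]
      simp only [RCLike.re_to_complex, Complex.ofReal_re]
      ring
    have hdegC : (C c).natDegree ≤ n := by simp [natDegree_C]
    have := hopt (C c) hdegC
    rw [hCc] at this
    rw [key] at this
    have hfs : 0 < Complex.normSq (f 0) := by simpa [Complex.normSq_pos] using hf0
    have : ‖toH q - oneH‖ ^ 2 ≤ 1 - Complex.normSq (f 0) / ‖F‖ ^ 2 := this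
    have hpos : 0 < Complex.normSq (f 0) / ‖F‖ ^ 2 := by positivity
    linarith
  -- main argument : toH q = 0
  have hQ0 : toH q = 0 := by
    rcases eq_or_ne q 0 with h0 | hqne
    · apply Subtype.ext
      show polyMulSeq q f = 0
      funext m
      simp [h0, polyMulSeq]
    · -- factor out the root
      obtain ⟨r, hqr⟩ := (dvd_iff_isRoot (p := q) (a := α)).2 hroot
      have hrne : r ≠ 0 := by
        intro h; apply hqne; rw [hqr, h, mul_zero]
      have hXne : (X - C α : ℂ[X]) ≠ 0 := X_sub_C_ne_zero α
      have hdegq : q.natDegree = 1 + r.natDegree := by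
        rw [hqr, natDegree_mul hXne hrne, natDegree_X_sub_C]
      have hrn : r.natDegree ≤ n := by
        have := hq.1
        omega
      set U : Hsp := toH r with hU
      set SU : Hsp := (⟨shiftSeq 1 (polyMulSeq r f), memℓp_shift 1 (toHmem r)⟩ : Hsp) with hSU
      set u0 : ℂ := polyMulSeq r f 0 with hu0
      have hQ : toH q = SU - α • U := by
        apply Subtype.ext
        show polyMulSeq q f = shiftSeq 1 (polyMulSeq r f) - α • polyMulSeq r f
        have hq' : q = X * r + C (-α) * r := by
          rw [hqr, map_neg]; ring
        rw [hq', polyMulSeq_add, polyMulSeq_X_mul, polyMulSeq_C_mul]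
        funext m
        simp only [Pi.add_apply, Pi.sub_apply, Pi.smul_apply, smul_eq_mul]
        ring
      -- norms
      have hSUsq : ‖SU‖ ^ 2 = ‖U‖ ^ 2 := by
        rw [norm_sq_eq, norm_sq_eq]
        rw [Summable.tsum_eq_zero_add (summable_sq SU)]
        have hz : ‖(SU : ℕ → ℂ) 0‖ ^ 2 = 0 := by
          simp [hSU, shiftSeq]
        rw [hz, zero_add]
        congr 1
      -- inner products
      have hUone : ⟪U, oneH⟫ = conj u0 := by rw [inner_oneH]
      have hUU : ⟪U, U⟫ = ((‖U‖ ^ 2 : ℝ) : ℂ) := by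
        rw [inner_self_eq_norm_sq_to_K]
        norm_cast
      -- Eq A : ⟪U, SU⟫ = α‖U‖² + conj u0
      have EqA : ⟪U, SU⟫ = α * ((‖U‖ ^ 2 : ℝ) : ℂ) + conj u0 := by
        have := horth r hrn
        rw [hQ] at this
        rw [sub_sub, inner_sub_right, inner_add_right, inner_smul_right, hUU, hUone] at this
        linear_combination this
      -- Eq B : ‖Q‖² = -re(α u0)
      have EqB : ‖toH q‖ ^ 2 = -(α * u0).re := by
        have h2 := horth q hq.1
        rw [inner_sub_right, inner_self_eq_norm_sq_to_K, inner_oneH] at h2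
        have hq0 : (toH q : ℕ → ℂ) 0 = -(α * u0) := by
          rw [hQ]
          show (SU : ℕ → ℂ) 0 - (α • U : Hsp) 0 = -(α * u0)
          rw [lp.coeFn_smul, Pi.smul_apply]
          simp [hSU, hU, toH_coe, shiftSeq, hu0, smul_eq_mul]
        rw [hq0] at h2
        have h2' : ((‖toH q‖ : ℂ)) ^ 2 = conj (-(α * u0)) := by
          rw [sub_eq_zero] at h2; exact h2
        have hre := congrArg Complex.re h2'
        simpa [← Complex.ofReal_pow, Complex.conj_re] using hre
      -- Eq C : ‖Q‖² = ‖U‖²(1 - |α|²) - 2 re(α u0)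
      have EqC : ‖toH q‖ ^ 2
          = ‖U‖ ^ 2 * (1 - Complex.normSq α) - 2 * (α * u0).re := by
        rw [hQ, norm_sub_sq (𝕜 := ℂ)]
        have hin : ⟪SU, α • U⟫ = α * (conj α * ((‖U‖ ^ 2 : ℝ) : ℂ) + u0) := by
          rw [inner_smul_right]
          congr 1
          rw [← inner_conj_symm SU U, EqA]
          rw [map_add, map_mul, Complex.conj_conj, Complex.conj_ofReal]
        have hre : (⟪SU, α • U⟫).re = Complex.normSq α * ‖U‖ ^ 2 + (α * u0).re := by
          rw [hin]
          have : α * (conj α * ((‖U‖ ^ 2 : ℝ) : ℂ) + u0)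
              = ((Complex.normSq α * ‖U‖ ^ 2 : ℝ) : ℂ) + α * u0 := by
            push_cast
            rw [← Complex.mul_conj]
            ring
          rw [this, Complex.add_re, Complex.ofReal_re]
        have hnsm : ‖α • U‖ ^ 2 = Complex.normSq α * ‖U‖ ^ 2 := by
          rw [norm_smul, mul_pow, Complex.sq_norm]
        simp only [RCLike.re_to_complex]
        rw [hre, hnsm, hSUsq]
        ring
      -- combine
      have habs : Complex.normSq α ≤ 1 := by
        rw [← Complex.sq_norm]
        nlinarith [norm_nonneg α]
      have hQnn : (0:ℝ) ≤ ‖toH q‖ ^ 2 := by positivity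
      have hUnn : (0:ℝ) ≤ ‖U‖ ^ 2 * (1 - Complex.normSq α) := by
        have : (0:ℝ) ≤ ‖U‖ ^ 2 := by positivity
        nlinarith
      have hzero : ‖toH q‖ ^ 2 = 0 := by linarith [EqB, EqC]
      have : ‖toH q‖ = 0 := by
        nlinarith [norm_nonneg (toH q)]
      exact norm_eq_zero.mp this
  rw [hQ0] at hlt
  rw [zero_sub, norm_neg, norm_oneH_sq] at hlt
  exact lt_irrefl 1 hlt
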